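/- arXiv:2604.15896 — 2 statements merged into one kernel-verified Lean document; each statement's English description precedes it below -/
import Mathlib

section
/- Let Λ be a nonnegative random variable with finite fourth moment, mean μ > 0, variance v, third cumulant k₃, and fourth cumulant k₄, and let Y | Λ ~ Poisson(Λ). Define η := (Y − μ)² − Y. Then E[η] = v and Var(η) = 2μ² + 4μv + 2v² + 2v + 4k₃ + k₄. -/
open MeasureTheory ProbabilityTheory
open scoped NNReal

/-- Third cumulant: the third central moment. -/
noncomputable def cum3 {Ω : Type*} [MeasurableSpace Ω] (X : Ω → ℝ) (μ : Measure Ω) : ℝ :=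
  ProbabilityTheory.centralMoment X 3 μ

/-- Fourth cumulant: fourth central moment minus three times the squared variance. -/
noncomputable def cum4 {Ω : Type*} [MeasurableSpace Ω] (X : Ω → ℝ) (μ : Measure Ω) : ℝ :=
  ProbabilityTheory.centralMoment X 4 μ - 3 * (ProbabilityTheory.variance X μ) ^ 2

section MPaux

open Real
open scoped ENNReal

lemma MP.hasSum_desc (r : ℝ≥0) (k : ℕ) :
    HasSum (fun n => poissonPMFReal r n * (n.descFactorial k : ℝ)) ((r:ℝ) ^ k) := by
  have h0 : ∀ i ∈ Finset.range k, poissonPMFReal r i * (i.descFactorial k : ℝ) = 0 := by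
    intro i hi
    rw [Nat.descFactorial_eq_zero_iff_lt.mpr (Finset.mem_range.mp hi)]
    simp
  have hshift : ∀ m : ℕ, poissonPMFReal r (m + k) * ((m + k).descFactorial k : ℝ)
      = (r:ℝ) ^ k * poissonPMFReal r m := by
    intro m
    have hfac : (Nat.factorial m) * (m + k).descFactorial k = Nat.factorial (m + k) := by
      have := Nat.factorial_mul_descFactorial (show k ≤ m + k by omega)
      simpa using this
    have hcast : ((m + k).descFactorial k : ℝ) * (Nat.factorial m : ℝ)
        = (Nat.factorial (m + k) : ℝ) := by
      rw [mul_comm]; exact_mod_cast congrArg (Nat.cast (R := ℝ)) hfac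
    have hne : ((Nat.factorial m : ℝ)) ≠ 0 := by positivity
    have hne2 : ((Nat.factorial (m + k) : ℝ)) ≠ 0 := by positivity
    unfold poissonPMFReal
    rw [pow_add]
    field_simp
    linear_combination ((r:ℝ)^m * (r:ℝ)^k) * hcast
  have h1 : HasSum (fun m => poissonPMFReal r (m + k) * ((m + k).descFactorial k : ℝ))
      ((r:ℝ) ^ k) := by
    simp_rw [hshift]
    simpa [poissonPMFReal] using (poissonPMFRealSum r).mul_left ((r:ℝ)^k)
  have := (hasSum_nat_add_iff (f := fun n => poissonPMFReal r n * (n.descFactorial k : ℝ)) k).mp h1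
  simpa [Finset.sum_eq_zero h0] using this

lemma MP.poisson_singleton (r : ℝ≥0) (n : ℕ) :
    poissonMeasure r {n} = ENNReal.ofReal (poissonPMFReal r n) := by
  rw [poissonMeasure_singleton]
  rfl

lemma MP.integrable_of_hasSum {f : ℕ → ℝ} {r : ℝ≥0} {c : ℝ} (hf0 : ∀ n, 0 ≤ f n)
    (h : HasSum (fun n => poissonPMFReal r n * f n) c) :
    Integrable f (poissonMeasure r) := by
  constructor
  · exact (measurable_from_top (f := f)).aestronglyMeasurable
  · rw [HasFiniteIntegral, lintegral_countable']
    have heq : ∀ n : ℕ, ‖f n‖ₑ * poissonMeasure r {n}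
        = ENNReal.ofReal (poissonPMFReal r n * f n) := by
      intro n
      rw [MP.poisson_singleton, enorm_eq_ofReal (hf0 n),
        ← ENNReal.ofReal_mul (hf0 n), mul_comm (f n)]
    simp_rw [heq]
    rw [← ENNReal.ofReal_tsum_of_nonneg (fun n => mul_nonneg poissonPMFReal_nonneg (hf0 n))
      h.summable]
    exact ENNReal.ofReal_lt_top

lemma MP.integral_of_hasSum {f : ℕ → ℝ} {r : ℝ≥0} {c : ℝ} (hf0 : ∀ n, 0 ≤ f n)
    (h : HasSum (fun n => poissonPMFReal r n * f n) c) :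
    ∫ n, f n ∂(poissonMeasure r) = c := by
  rw [integral_countable (MP.integrable_of_hasSum hf0 h)]
  have heq : ∀ n : ℕ, (poissonMeasure r).real {n} • f n = poissonPMFReal r n * f n := by
    intro n
    rw [smul_eq_mul, poissonMeasure_real_singleton]
    rfl
  rw [tsum_congr heq]
  exact h.tsum_eq

lemma MP.id2 (n : ℕ) : ((n:ℝ))^2 = (n.descFactorial 2 : ℝ) + (n.descFactorial 1 : ℝ) := by
  match n with
  | 0 => norm_num [Nat.descFactorial]
  | 1 => norm_num [Nat.descFactorial]
  | (m+2) =>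
    have h2 : (m+2).descFactorial 2 = (m+1)*(m+2) := by simp [Nat.descFactorial_succ]
    rw [h2, Nat.descFactorial_one]
    push_cast
    ring

lemma MP.id3 (n : ℕ) : ((n:ℝ))^3 = (n.descFactorial 3 : ℝ) + 3 * (n.descFactorial 2 : ℝ)
    + (n.descFactorial 1 : ℝ) := by
  match n with
  | 0 => norm_num [Nat.descFactorial]
  | 1 => norm_num [Nat.descFactorial]
  | 2 => norm_num [Nat.descFactorial]
  | (m+3) =>
    have h2 : (m+3).descFactorial 2 = (m+2)*(m+3) := by simp [Nat.descFactorial_succ]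
    have h3 : (m+3).descFactorial 3 = (m+1)*((m+2)*(m+3)) := by
      rw [Nat.descFactorial_succ, h2]; congr 1
    rw [h2, h3, Nat.descFactorial_one]
    push_cast
    ring

lemma MP.id4 (n : ℕ) : ((n:ℝ))^4 = (n.descFactorial 4 : ℝ) + 6 * (n.descFactorial 3 : ℝ)
    + 7 * (n.descFactorial 2 : ℝ) + (n.descFactorial 1 : ℝ) := by
  match n with
  | 0 => norm_num [Nat.descFactorial]
  | 1 => norm_num [Nat.descFactorial]
  | 2 => norm_num [Nat.descFactorial]
  | 3 => norm_num [Nat.descFactorial]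
  | (m+4) =>
    have h2 : (m+4).descFactorial 2 = (m+3)*(m+4) := by simp [Nat.descFactorial_succ]
    have h3 : (m+4).descFactorial 3 = (m+2)*((m+3)*(m+4)) := by
      rw [Nat.descFactorial_succ, h2]; congr 1
    have h4 : (m+4).descFactorial 4 = (m+1)*((m+2)*((m+3)*(m+4))) := by
      rw [Nat.descFactorial_succ, h3]; congr 1
    rw [h2, h3, h4, Nat.descFactorial_one]
    push_cast
    ring

lemma MP.hasSum_pow1 (r : ℝ≥0) :
    HasSum (fun n => poissonPMFReal r n * (n:ℝ)) ((r:ℝ)) := by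
  simpa [Nat.descFactorial_one] using MP.hasSum_desc r 1

lemma MP.hasSum_pow2 (r : ℝ≥0) :
    HasSum (fun n => poissonPMFReal r n * (n:ℝ)^2) ((r:ℝ)^2 + (r:ℝ)) := by
  have h := (MP.hasSum_desc r 2).add (MP.hasSum_desc r 1)
  have hfun : (fun n => poissonPMFReal r n * (n.descFactorial 2 : ℝ)
      + poissonPMFReal r n * (n.descFactorial 1 : ℝ))
      = fun n => poissonPMFReal r n * (n:ℝ)^2 := by
    funext n; rw [MP.id2 n]; ring
  rw [hfun] at h
  simpa [pow_one] using h

lemma MP.hasSum_pow3 (r : ℝ≥0) :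
    HasSum (fun n => poissonPMFReal r n * (n:ℝ)^3)
      ((r:ℝ)^3 + 3*(r:ℝ)^2 + (r:ℝ)) := by
  have h := (MP.hasSum_desc r 3).add
    (((MP.hasSum_desc r 2).mul_left 3).add (MP.hasSum_desc r 1))
  have hfun : (fun n => poissonPMFReal r n * (n.descFactorial 3 : ℝ)
      + (3 * (poissonPMFReal r n * (n.descFactorial 2 : ℝ))
        + poissonPMFReal r n * (n.descFactorial 1 : ℝ)))
      = fun n => poissonPMFReal r n * (n:ℝ)^3 := by
    funext n; rw [MP.id3 n]; ring
  rw [hfun] at h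
  convert h using 1
  rw [pow_one]; ring

lemma MP.hasSum_pow4 (r : ℝ≥0) :
    HasSum (fun n => poissonPMFReal r n * (n:ℝ)^4)
      ((r:ℝ)^4 + 6*(r:ℝ)^3 + 7*(r:ℝ)^2 + (r:ℝ)) := by
  have h := (MP.hasSum_desc r 4).add
    (((MP.hasSum_desc r 3).mul_left 6).add
      (((MP.hasSum_desc r 2).mul_left 7).add (MP.hasSum_desc r 1)))
  have hfun : (fun n => poissonPMFReal r n * (n.descFactorial 4 : ℝ)
      + (6 * (poissonPMFReal r n * (n.descFactorial 3 : ℝ))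
        + (7 * (poissonPMFReal r n * (n.descFactorial 2 : ℝ))
          + poissonPMFReal r n * (n.descFactorial 1 : ℝ))))
      = fun n => poissonPMFReal r n * (n:ℝ)^4 := by
    funext n; rw [MP.id4 n]; ring
  rw [hfun] at h
  convert h using 1
  rw [pow_one]; ring

lemma MP.transfer {Ω : Type*} [MeasurableSpace Ω] {P : Measure Ω} [IsProbabilityMeasure P]
    (Λ : Ω → ℝ≥0) (Y : Ω → ℕ) (hΛ : Measurable Λ) (hY : Measurable Y)
    (hcond : ∀ᵐ ω ∂P, condDistrib Y Λ P (Λ ω) = poissonMeasure (Λ ω))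
    (g : ℕ → ℝ) (pg : ℝ≥0 → ℝ) (hg0 : ∀ n, 0 ≤ g n) (hpg0 : ∀ r, 0 ≤ pg r)
    (hgint : ∀ r, Integrable g (poissonMeasure r))
    (hgval : ∀ r, ∫ n, g n ∂(poissonMeasure r) = pg r)
    (hpgint : Integrable (fun ω => pg (Λ ω)) P) :
    Integrable (fun ω => g (Y ω)) P ∧ ∫ ω, g (Y ω) ∂P = ∫ ω, pg (Λ ω) ∂P := by
  set ρ : Measure (ℝ≥0 × ℕ) := P.map (fun ω => (Λ ω, Y ω)) with hρdef
  have hmeas : Measurable (fun ω => (Λ ω, Y ω)) := hΛ.prodMk hY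
  haveI : IsProbabilityMeasure ρ := Measure.isProbabilityMeasure_map hmeas.aemeasurable
  have hG : Measurable (fun n : ℕ => ENNReal.ofReal (g n)) := measurable_from_top
  have hdis : ρ.fst ⊗ₘ ρ.condKernel = ρ := ρ.disintegrate ρ.condKernel
  have hfst : ρ.fst = P.map Λ := Measure.fst_map_prodMk hY
  have hck : ρ.condKernel = condDistrib Y Λ P := by rw [condDistrib]
  have key : ∫⁻ ω, ENNReal.ofReal (g (Y ω)) ∂P = ENNReal.ofReal (∫ ω, pg (Λ ω) ∂P) := by
    have l1 : ∫⁻ ω, ENNReal.ofReal (g (Y ω)) ∂P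
        = ∫⁻ p : ℝ≥0 × ℕ, ENNReal.ofReal (g p.2) ∂ρ := by
      have h1 : Measurable fun p : ℝ≥0 × ℕ => ENNReal.ofReal (g p.2) :=
        hG.comp measurable_snd
      rw [hρdef]
      exact (lintegral_map h1 hmeas).symm
    have l2 : ∫⁻ p : ℝ≥0 × ℕ, ENNReal.ofReal (g p.2) ∂ρ
        = ∫⁻ x, ∫⁻ n, ENNReal.ofReal (g n) ∂(ρ.condKernel x) ∂ρ.fst := by
      have h1 : Measurable fun p : ℝ≥0 × ℕ => ENNReal.ofReal (g p.2) :=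
        hG.comp measurable_snd
      conv_lhs => rw [← hdis]
      exact Measure.lintegral_compProd h1
    have l3 : ∫⁻ x, ∫⁻ n, ENNReal.ofReal (g n) ∂(ρ.condKernel x) ∂ρ.fst
        = ∫⁻ ω, ∫⁻ n, ENNReal.ofReal (g n) ∂(condDistrib Y Λ P (Λ ω)) ∂P := by
      have h1 : Measurable fun x => ∫⁻ n, ENNReal.ofReal (g n) ∂(condDistrib Y Λ P x) :=
        Measurable.lintegral_kernel_prod_right (κ := condDistrib Y Λ P)
          (hG.comp measurable_snd)
      rw [hck, hfst, lintegral_map h1 hΛ]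
    have l4 : ∫⁻ ω, ∫⁻ n, ENNReal.ofReal (g n) ∂(condDistrib Y Λ P (Λ ω)) ∂P
        = ∫⁻ ω, ENNReal.ofReal (pg (Λ ω)) ∂P := by
      refine lintegral_congr_ae ?_
      filter_upwards [hcond] with ω hω
      rw [hω, ← ofReal_integral_eq_lintegral_ofReal (hgint (Λ ω))
        (Filter.Eventually.of_forall hg0), hgval]
    rw [l1, l2, l3, l4, ← ofReal_integral_eq_lintegral_ofReal hpgint
      (Filter.Eventually.of_forall (fun ω => hpg0 (Λ ω)))]
  have hsm : AEStronglyMeasurable (fun ω => g (Y ω)) P :=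
    ((measurable_from_top (f := g)).comp hY).aestronglyMeasurable
  have hint : Integrable (fun ω => g (Y ω)) P := by
    refine ⟨hsm, ?_⟩
    rw [HasFiniteIntegral]
    have : ∀ ω, ‖g (Y ω)‖ₑ = ENNReal.ofReal (g (Y ω)) := fun ω =>
      enorm_eq_ofReal (hg0 _)
    simp_rw [this, key]
    exact ENNReal.ofReal_lt_top
  refine ⟨hint, ?_⟩
  rw [integral_eq_lintegral_of_nonneg_ae (Filter.Eventually.of_forall (fun ω => hg0 (Y ω))) hsm,
    key, ENNReal.toReal_ofReal (integral_nonneg (fun ω => hpg0 (Λ ω)))]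

lemma MP.pow_le {x : ℝ} (hx : 0 ≤ x) {k : ℕ} (hk : k ≤ 4) : x ^ k ≤ 1 + x ^ 4 := by
  rcases le_total x 1 with h | h
  · have h1 : x ^ k ≤ 1 := pow_le_one₀ hx h
    nlinarith [pow_nonneg hx 4]
  · have h1 : x ^ k ≤ x ^ 4 := pow_le_pow_right₀ h hk
    linarith


lemma MP.integral_poly4 {Ω : Type*} [MeasurableSpace Ω] {P : Measure Ω}
    [IsProbabilityMeasure P] {f : Ω → ℝ} {A B C D : ℝ} (a b c d e : ℝ)
    (h1 : Integrable (fun ω => f ω) P) (h2 : Integrable (fun ω => f ω ^ 2) P)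
    (h3 : Integrable (fun ω => f ω ^ 3) P) (h4 : Integrable (fun ω => f ω ^ 4) P)
    (hA : ∫ ω, f ω ∂P = A) (hB : ∫ ω, f ω ^ 2 ∂P = B) (hC : ∫ ω, f ω ^ 3 ∂P = C)
    (hD : ∫ ω, f ω ^ 4 ∂P = D) :
    ∫ ω, (a * f ω ^ 4 + b * f ω ^ 3 + c * f ω ^ 2 + d * f ω + e) ∂P
      = a * D + b * C + c * B + d * A + e := by
  have g4 : Integrable (fun ω => a * f ω ^ 4) P := h4.const_mul a
  have g3 : Integrable (fun ω => b * f ω ^ 3) P := h3.const_mul b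
  have g2 : Integrable (fun ω => c * f ω ^ 2) P := h2.const_mul c
  have g1 : Integrable (fun ω => d * f ω) P := h1.const_mul d
  have g43 : Integrable (fun ω => a * f ω ^ 4 + b * f ω ^ 3) P := g4.add g3
  have g432 : Integrable (fun ω => a * f ω ^ 4 + b * f ω ^ 3 + c * f ω ^ 2) P := g43.add g2
  have g4321 : Integrable (fun ω => a * f ω ^ 4 + b * f ω ^ 3 + c * f ω ^ 2 + d * f ω) P :=
    g432.add g1
  rw [integral_add g4321 (integrable_const e), integral_add g432 g1, integral_add g43 g2,
    integral_add g4 g3, integral_const_mul, integral_const_mul, integral_const_mul,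
    integral_const_mul, hA, hB, hC, hD, integral_const]
  simp [measure_univ]

end MPaux

/-- For the mixed-Poisson model `Y | Λ ~ Poisson(Λ)` with `E[Λ] = μ > 0`,
`Var(Λ) = v`, third and fourth cumulants `k₃, k₄` of `Λ`, the Poisson-corrected
squared residual `η = (Y − μ)² − Y` satisfies `E[η] = v` and
`Var(η) = 2μ² + 4μv + 2v² + 2v + 4k₃ + k₄`. -/
theorem mixed_poisson_eta_mean_var
    {Ω : Type*} [MeasurableSpace Ω] {P : Measure Ω} [IsProbabilityMeasure P]
    (Λ : Ω → ℝ≥0) (Y : Ω → ℕ) (hΛ : Measurable Λ) (hY : Measurable Y)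
    (hmom : MemLp (fun ω => (Λ ω : ℝ)) 4 P)
    (hμpos : 0 < ∫ ω, (Λ ω : ℝ) ∂P)
    (hcond : ∀ᵐ ω ∂P, condDistrib Y Λ P (Λ ω) = poissonMeasure (Λ ω)) :
    (∫ ω, (((Y ω : ℝ) - ∫ ω', (Λ ω' : ℝ) ∂P) ^ 2 - (Y ω : ℝ)) ∂P)
        = variance (fun ω => (Λ ω : ℝ)) P ∧
    variance (fun ω => ((Y ω : ℝ) - ∫ ω', (Λ ω' : ℝ) ∂P) ^ 2 - (Y ω : ℝ)) P
        = 2 * (∫ ω, (Λ ω : ℝ) ∂P) ^ 2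
          + 4 * (∫ ω, (Λ ω : ℝ) ∂P) * variance (fun ω => (Λ ω : ℝ)) P
          + 2 * (variance (fun ω => (Λ ω : ℝ)) P) ^ 2
          + 2 * variance (fun ω => (Λ ω : ℝ)) P
          + 4 * cum3 (fun ω => (Λ ω : ℝ)) P
          + cum4 (fun ω => (Λ ω : ℝ)) P := by
  set m1 := ∫ ω, (Λ ω : ℝ) ∂P with hm1def
  set m2 := ∫ ω, (Λ ω : ℝ) ^ 2 ∂P with hm2def
  set m3 := ∫ ω, (Λ ω : ℝ) ^ 3 ∂P with hm3def
  set m4 := ∫ ω, (Λ ω : ℝ) ^ 4 ∂P with hm4def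
  have hΛm : Measurable (fun ω => (Λ ω : ℝ)) := measurable_coe_nnreal_real.comp hΛ
  have hYm : Measurable (fun ω => (Y ω : ℝ)) :=
    (measurable_from_top (f := fun n : ℕ => (n : ℝ))).comp hY
  have hL4 : Integrable (fun ω => (Λ ω : ℝ) ^ 4) P := by
    have h := hmom.integrable_norm_rpow (by norm_num) (by norm_num)
    simp only [ENNReal.toReal_ofNat] at h
    refine h.congr (Filter.Eventually.of_forall fun ω => ?_)
    show ‖(Λ ω : ℝ)‖ ^ (4:ℝ) = (Λ ω : ℝ) ^ 4
    rw [Real.norm_of_nonneg (Λ ω).coe_nonneg, ← Real.rpow_natCast ((Λ ω : ℝ)) 4]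
    norm_num
  have hIk : ∀ k, k ≤ 4 → Integrable (fun ω => (Λ ω : ℝ) ^ k) P := by
    intro k hk
    refine ((integrable_const (1:ℝ)).add hL4).mono'
      ((hΛm.pow_const k).aestronglyMeasurable)
      (Filter.Eventually.of_forall fun ω => ?_)
    rw [Real.norm_of_nonneg (pow_nonneg (Λ ω).coe_nonneg k)]
    exact MP.pow_le (Λ ω).coe_nonneg hk
  have hI1 : Integrable (fun ω => (Λ ω : ℝ)) P := by simpa using hIk 1 (by norm_num)
  have hI2 := hIk 2 (by norm_num)
  have hI3 := hIk 3 (by norm_num)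
  have hI4 := hIk 4 (by norm_num)
  -- transfer for each power of Y
  have ht1 := MP.transfer Λ Y hΛ hY hcond (fun n => (n:ℝ)) (fun r => (r:ℝ))
    (fun n => Nat.cast_nonneg n) (fun r => r.coe_nonneg)
    (fun r => MP.integrable_of_hasSum (fun n => Nat.cast_nonneg n) (MP.hasSum_pow1 r))
    (fun r => MP.integral_of_hasSum (fun n => Nat.cast_nonneg n) (MP.hasSum_pow1 r)) hI1
  have ht2 := MP.transfer Λ Y hΛ hY hcond (fun n => (n:ℝ)^2) (fun r => (r:ℝ)^2 + (r:ℝ))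
    (fun n => by positivity) (fun r => by positivity)
    (fun r => MP.integrable_of_hasSum (fun n => by positivity) (MP.hasSum_pow2 r))
    (fun r => MP.integral_of_hasSum (fun n => by positivity) (MP.hasSum_pow2 r))
    (hI2.add hI1)
  have ht3 := MP.transfer Λ Y hΛ hY hcond (fun n => (n:ℝ)^3)
    (fun r => (r:ℝ)^3 + 3*(r:ℝ)^2 + (r:ℝ))
    (fun n => by positivity) (fun r => by positivity)
    (fun r => MP.integrable_of_hasSum (fun n => by positivity) (MP.hasSum_pow3 r))
    (fun r => MP.integral_of_hasSum (fun n => by positivity) (MP.hasSum_pow3 r))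
    ((hI3.add (hI2.const_mul 3)).add hI1)
  have ht4 := MP.transfer Λ Y hΛ hY hcond (fun n => (n:ℝ)^4)
    (fun r => (r:ℝ)^4 + 6*(r:ℝ)^3 + 7*(r:ℝ)^2 + (r:ℝ))
    (fun n => by positivity) (fun r => by positivity)
    (fun r => MP.integrable_of_hasSum (fun n => by positivity) (MP.hasSum_pow4 r))
    (fun r => MP.integral_of_hasSum (fun n => by positivity) (MP.hasSum_pow4 r))
    (((hI4.add (hI3.const_mul 6)).add (hI2.const_mul 7)).add hI1)
  obtain ⟨hq1, hq1v⟩ := ht1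
  obtain ⟨hq2, hq2v⟩ := ht2
  obtain ⟨hq3, hq3v⟩ := ht3
  obtain ⟨hq4, hq4v⟩ := ht4
  have hq1v' : ∫ ω, (Y ω : ℝ) ∂P = m1 := hq1v
  have hq2v' : ∫ ω, (Y ω : ℝ)^2 ∂P = m2 + m1 := by
    rw [hq2v]
    show (∫ ω, ((Λ ω : ℝ)^2 + (Λ ω : ℝ)) ∂P) = m2 + m1
    rw [show (∫ ω, ((Λ ω : ℝ)^2 + (Λ ω : ℝ)) ∂P)
        = ∫ ω, (0 * (Λ ω : ℝ)^4 + 0 * (Λ ω : ℝ)^3 + 1 * (Λ ω : ℝ)^2 + 1 * (Λ ω : ℝ) + 0) ∂P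
      from integral_congr_ae (Filter.Eventually.of_forall fun ω => by ring),
      MP.integral_poly4 0 0 1 1 0 hI1 hI2 hI3 hI4 rfl rfl rfl rfl]
    ring
  have hq3v' : ∫ ω, (Y ω : ℝ)^3 ∂P = m3 + 3*m2 + m1 := by
    rw [hq3v]
    show (∫ ω, ((Λ ω : ℝ)^3 + 3*(Λ ω : ℝ)^2 + (Λ ω : ℝ)) ∂P) = m3 + 3*m2 + m1
    rw [show (∫ ω, ((Λ ω : ℝ)^3 + 3*(Λ ω : ℝ)^2 + (Λ ω : ℝ)) ∂P)
        = ∫ ω, (0 * (Λ ω : ℝ)^4 + 1 * (Λ ω : ℝ)^3 + 3 * (Λ ω : ℝ)^2 + 1 * (Λ ω : ℝ) + 0) ∂P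
      from integral_congr_ae (Filter.Eventually.of_forall fun ω => by ring),
      MP.integral_poly4 0 1 3 1 0 hI1 hI2 hI3 hI4 rfl rfl rfl rfl]
    ring
  have hq4v' : ∫ ω, (Y ω : ℝ)^4 ∂P = m4 + 6*m3 + 7*m2 + m1 := by
    rw [hq4v]
    show (∫ ω, ((Λ ω : ℝ)^4 + 6*(Λ ω : ℝ)^3 + 7*(Λ ω : ℝ)^2 + (Λ ω : ℝ)) ∂P)
      = m4 + 6*m3 + 7*m2 + m1
    rw [show (∫ ω, ((Λ ω : ℝ)^4 + 6*(Λ ω : ℝ)^3 + 7*(Λ ω : ℝ)^2 + (Λ ω : ℝ)) ∂P)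
        = ∫ ω, (1 * (Λ ω : ℝ)^4 + 6 * (Λ ω : ℝ)^3 + 7 * (Λ ω : ℝ)^2 + 1 * (Λ ω : ℝ) + 0) ∂P
      from integral_congr_ae (Filter.Eventually.of_forall fun ω => by ring),
      MP.integral_poly4 1 6 7 1 0 hI1 hI2 hI3 hI4 rfl rfl rfl rfl]
    ring
  -- variance of Λ
  have hvL : variance (fun ω => (Λ ω : ℝ)) P = m2 - m1^2 := by
    rw [variance_eq_sub (hmom.mono_exponent (by norm_num))]
    simp only [Pi.pow_apply]
    rfl
  -- central moments of Λ
  have hc3 : centralMoment (fun ω => (Λ ω : ℝ)) 3 P = m3 - 3*m1*m2 + 2*m1^3 := by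
    simp only [centralMoment, Pi.sub_apply, Pi.pow_apply]
    have heq : (fun ω => ((Λ ω : ℝ) - m1)^3)
        = fun ω => (Λ ω : ℝ)^3 - 3*m1*(Λ ω : ℝ)^2 + 3*m1^2*(Λ ω : ℝ) - m1^3 :=
      funext fun ω => by ring
    rw [← hm1def, heq,
      show (∫ ω, ((Λ ω : ℝ)^3 - 3*m1*(Λ ω : ℝ)^2 + 3*m1^2*(Λ ω : ℝ) - m1^3) ∂P)
        = ∫ ω, (0 * (Λ ω : ℝ)^4 + 1 * (Λ ω : ℝ)^3 + (-(3*m1)) * (Λ ω : ℝ)^2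
            + (3*m1^2) * (Λ ω : ℝ) + (-(m1^3))) ∂P
      from integral_congr_ae (Filter.Eventually.of_forall fun ω => by ring),
      MP.integral_poly4 0 1 (-(3*m1)) (3*m1^2) (-(m1^3)) hI1 hI2 hI3 hI4 rfl rfl rfl rfl]
    ring
  have hc4 : centralMoment (fun ω => (Λ ω : ℝ)) 4 P
      = m4 - 4*m1*m3 + 6*m1^2*m2 - 3*m1^4 := by
    simp only [centralMoment, Pi.sub_apply, Pi.pow_apply]
    have heq : (fun ω => ((Λ ω : ℝ) - m1)^4)
        = fun ω => (Λ ω : ℝ)^4 - 4*m1*(Λ ω : ℝ)^3 + 6*m1^2*(Λ ω : ℝ)^2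
          - 4*m1^3*(Λ ω : ℝ) + m1^4 :=
      funext fun ω => by ring
    rw [← hm1def, heq,
      show (∫ ω, ((Λ ω : ℝ)^4 - 4*m1*(Λ ω : ℝ)^3 + 6*m1^2*(Λ ω : ℝ)^2
            - 4*m1^3*(Λ ω : ℝ) + m1^4) ∂P)
        = ∫ ω, (1 * (Λ ω : ℝ)^4 + (-(4*m1)) * (Λ ω : ℝ)^3 + (6*m1^2) * (Λ ω : ℝ)^2
            + (-(4*m1^3)) * (Λ ω : ℝ) + m1^4) ∂P
      from integral_congr_ae (Filter.Eventually.of_forall fun ω => by ring),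
      MP.integral_poly4 1 (-(4*m1)) (6*m1^2) (-(4*m1^3)) (m1^4) hI1 hI2 hI3 hI4 rfl rfl rfl rfl]
    ring
  -- eta
  have hηeq : (fun ω => ((Y ω : ℝ) - m1)^2 - (Y ω : ℝ))
      = fun ω => (Y ω : ℝ)^2 - (2*m1+1)*(Y ω : ℝ) + m1^2 := funext fun ω => by ring
  have hηval : ∫ ω, (((Y ω : ℝ) - m1)^2 - (Y ω : ℝ)) ∂P
      = (m2 + m1) - (2*m1+1)*m1 + m1^2 := by
    rw [show (fun ω => (((Y ω : ℝ) - m1)^2 - (Y ω : ℝ))) = _ from hηeq,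
      show (∫ ω, ((Y ω : ℝ)^2 - (2*m1+1)*(Y ω : ℝ) + m1^2) ∂P)
        = ∫ ω, (0 * (Y ω : ℝ)^4 + 0 * (Y ω : ℝ)^3 + 1 * (Y ω : ℝ)^2
            + (-(2*m1+1)) * (Y ω : ℝ) + m1^2) ∂P
      from integral_congr_ae (Filter.Eventually.of_forall fun ω => by ring),
      MP.integral_poly4 0 0 1 (-(2*m1+1)) (m1^2) hq1 hq2 hq3 hq4 hq1v' hq2v' hq3v' hq4v']
    ring
  have hη2eq : (fun ω => (((Y ω : ℝ) - m1)^2 - (Y ω : ℝ))^2)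
      = fun ω => (Y ω : ℝ)^4 - (2*(2*m1+1))*(Y ω : ℝ)^3
        + ((2*m1+1)^2+2*m1^2)*(Y ω : ℝ)^2 - (2*m1^2*(2*m1+1))*(Y ω : ℝ) + m1^4 :=
    funext fun ω => by ring
  have hη2int : Integrable (fun ω => (((Y ω : ℝ) - m1)^2 - (Y ω : ℝ))^2) P := by
    rw [hη2eq]
    exact (((hq4.sub (hq3.const_mul _)).add (hq2.const_mul _)).sub (hq1.const_mul _)).add
      (integrable_const _)
  have hη2val : ∫ ω, (((Y ω : ℝ) - m1)^2 - (Y ω : ℝ))^2 ∂P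
      = (m4 + 6*m3 + 7*m2 + m1) - (2*(2*m1+1))*(m3 + 3*m2 + m1)
        + ((2*m1+1)^2+2*m1^2)*(m2 + m1) - (2*m1^2*(2*m1+1))*m1 + m1^4 := by
    rw [hη2eq,
      show (∫ ω, ((Y ω : ℝ)^4 - (2*(2*m1+1))*(Y ω : ℝ)^3
            + ((2*m1+1)^2+2*m1^2)*(Y ω : ℝ)^2 - (2*m1^2*(2*m1+1))*(Y ω : ℝ) + m1^4) ∂P)
        = ∫ ω, (1 * (Y ω : ℝ)^4 + (-(2*(2*m1+1))) * (Y ω : ℝ)^3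
            + ((2*m1+1)^2+2*m1^2) * (Y ω : ℝ)^2 + (-(2*m1^2*(2*m1+1))) * (Y ω : ℝ) + m1^4) ∂P
      from integral_congr_ae (Filter.Eventually.of_forall fun ω => by ring),
      MP.integral_poly4 1 (-(2*(2*m1+1))) ((2*m1+1)^2+2*m1^2) (-(2*m1^2*(2*m1+1))) (m1^4)
        hq1 hq2 hq3 hq4 hq1v' hq2v' hq3v' hq4v']
    ring
  have hηsm : AEStronglyMeasurable (fun ω => ((Y ω : ℝ) - m1)^2 - (Y ω : ℝ)) P :=
    (((hYm.sub measurable_const).pow_const 2).sub hYm).aestronglyMeasurable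
  have hηmem : MemLp (fun ω => ((Y ω : ℝ) - m1)^2 - (Y ω : ℝ)) 2 P :=
    (memLp_two_iff_integrable_sq hηsm).2 hη2int
  have hvη : variance (fun ω => ((Y ω : ℝ) - m1)^2 - (Y ω : ℝ)) P
      = (∫ ω, (((Y ω : ℝ) - m1)^2 - (Y ω : ℝ))^2 ∂P)
        - (∫ ω, (((Y ω : ℝ) - m1)^2 - (Y ω : ℝ)) ∂P)^2 := by
    rw [variance_eq_sub hηmem]
    simp only [Pi.pow_apply]
  refine ⟨?_, ?_⟩
  · rw [hηval, hvL]; ring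
  · rw [hvη, hηval, hη2val, hvL, cum3, hc3, cum4, hc4, hvL]
    ring
end

section
/- Let Λᵢ, Λⱼ be nonnegative random variables with means μᵢ, μⱼ > 0 and finite fourth moments, and suppose Yᵢ and Yⱼ are, conditionally on (Λᵢ, Λⱼ), independent with Yᵢ ~ Poisson(Λᵢ) and Yⱼ ~ Poisson(Λⱼ). Define ψ°ₗ := ((Yₗ − μₗ)² − Yₗ)/μₗ² for ℓ ∈ {i, j}. Then Cov(ψ°ᵢ, ψ°ⱼ) = Cov((Λᵢ − μᵢ)², (Λⱼ − μⱼ)²) / (μᵢ²μⱼ²). In particular, if Λₗ = Ψ·Λ̃ₗ for a constant Ψ > 0 with the joint law of (Λ̃ᵢ, Λ̃ⱼ) independent of Ψ, this covariance does not depend on Ψ. -/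
open MeasureTheory ProbabilityTheory
open scoped NNReal

/-- Covariance of two real random variables. -/
noncomputable def rcov {Ω : Type*} [MeasurableSpace Ω] (P : Measure Ω) (f g : Ω → ℝ) : ℝ :=
  ∫ ω, (f ω - ∫ ω', f ω' ∂P) * (g ω - ∫ ω', g ω' ∂P) ∂P

section OracleAux

open Real
open scoped ENNReal

namespace OracleAux

/-! ### Poisson moment computations -/

lemma poisson_hasSum_id (r : ℝ≥0) :
    HasSum (fun n : ℕ => (n : ℝ) * poissonPMFReal r n) (r : ℝ) := by
  have h0 := poissonPMFRealSum r
  rw [← hasSum_nat_add_iff' 1]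
  have hsum0 : ∑ i ∈ Finset.range 1, (i : ℝ) * poissonPMFReal r i = 0 := by simp
  rw [hsum0, sub_zero]
  have h1 := h0.mul_left (r : ℝ)
  rw [mul_one] at h1
  convert h1 using 1
  · rfl
  funext n
  have hf : (n.factorial : ℝ) ≠ 0 := Nat.cast_ne_zero.mpr n.factorial_ne_zero
  have hn : ((n : ℝ) + 1) ≠ 0 := by positivity
  simp only [poissonPMFReal, Nat.factorial_succ, pow_succ]
  push_cast
  field_simp

lemma poisson_hasSum_fac2 (r : ℝ≥0) :
    HasSum (fun n : ℕ => (n : ℝ) * ((n : ℝ) - 1) * poissonPMFReal r n) ((r : ℝ) ^ 2) := by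
  have h0 := poissonPMFRealSum r
  rw [← hasSum_nat_add_iff' 2]
  have hsum0 : ∑ i ∈ Finset.range 2,
      (i : ℝ) * ((i : ℝ) - 1) * poissonPMFReal r i = 0 := by
    simp [Finset.sum_range_succ]
  rw [hsum0, sub_zero]
  have h1 := h0.mul_left ((r : ℝ) ^ 2)
  rw [mul_one] at h1
  convert h1 using 1
  · rfl
  funext n
  have hf : (n.factorial : ℝ) ≠ 0 := Nat.cast_ne_zero.mpr n.factorial_ne_zero
  have hn : ((n : ℝ) + 1) ≠ 0 := by positivity
  have hn2 : ((n : ℝ) + 2) ≠ 0 := by positivity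
  simp only [poissonPMFReal, Nat.factorial_succ, pow_succ]
  push_cast
  field_simp
  ring

lemma poisson_hasSum_sq (r : ℝ≥0) :
    HasSum (fun n : ℕ => (n : ℝ) ^ 2 * poissonPMFReal r n) ((r : ℝ) + (r : ℝ) ^ 2) := by
  have h := (poisson_hasSum_id r).add (poisson_hasSum_fac2 r)
  convert h using 1
  funext n
  ring

lemma poisson_lintegral_ofReal (r : ℝ≥0) (f : ℕ → ℝ) (hnn : ∀ n, 0 ≤ f n) (c : ℝ)
    (hs : HasSum (fun n => f n * poissonPMFReal r n) c) :
    ∫⁻ n, ENNReal.ofReal (f n) ∂poissonMeasure r = ENNReal.ofReal c := by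
  rw [lintegral_countable']
  have hsingle : ∀ n : ℕ, poissonMeasure r {n} = ENNReal.ofReal (poissonPMFReal r n) := by
    intro n
    rw [poissonMeasure_singleton]
    rfl
  calc ∑' n : ℕ, ENNReal.ofReal (f n) * poissonMeasure r {n}
      = ∑' n : ℕ, ENNReal.ofReal (f n * poissonPMFReal r n) := by
        refine tsum_congr fun n => ?_
        rw [hsingle n, ← ENNReal.ofReal_mul (hnn n)]
    _ = ENNReal.ofReal c := by
        rw [← hs.tsum_eq, ← ENNReal.ofReal_tsum_of_nonneg
          (fun n => mul_nonneg (hnn n) poissonPMFReal_nonneg) hs.summable]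

lemma poisson_integrable (r : ℝ≥0) (f : ℕ → ℝ) (hnn : ∀ n, 0 ≤ f n) (c : ℝ)
    (hs : HasSum (fun n => f n * poissonPMFReal r n) c) :
    Integrable f (poissonMeasure r) := by
  refine ⟨(measurable_of_countable f).aestronglyMeasurable, ?_⟩
  rw [hasFiniteIntegral_iff_norm]
  have heq : ∀ n : ℕ, ENNReal.ofReal ‖f n‖ = ENNReal.ofReal (f n) := fun n => by
    rw [Real.norm_eq_abs, abs_of_nonneg (hnn n)]
  calc ∫⁻ n, ENNReal.ofReal ‖f n‖ ∂poissonMeasure r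
      = ∫⁻ n, ENNReal.ofReal (f n) ∂poissonMeasure r := lintegral_congr fun n => heq n
    _ = ENNReal.ofReal c := poisson_lintegral_ofReal r f hnn c hs
    _ < ∞ := ENNReal.ofReal_lt_top

lemma poisson_integral (r : ℝ≥0) (f : ℕ → ℝ) (hnn : ∀ n, 0 ≤ f n) (c : ℝ)
    (hs : HasSum (fun n => f n * poissonPMFReal r n) c) :
    ∫ n, f n ∂poissonMeasure r = c := by
  have hc : 0 ≤ c := by
    rw [← hs.tsum_eq]
    exact tsum_nonneg fun n => mul_nonneg (hnn n) poissonPMFReal_nonneg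
  rw [integral_eq_lintegral_of_nonneg_ae (Filter.Eventually.of_forall hnn)
    (measurable_of_countable f).aestronglyMeasurable,
    poisson_lintegral_ofReal r f hnn c hs, ENNReal.toReal_ofReal hc]

lemma pois_int_id (r : ℝ≥0) : ∫ n, (n : ℝ) ∂poissonMeasure r = r :=
  poisson_integral r _ (fun n => Nat.cast_nonneg n) _ (poisson_hasSum_id r)

lemma pois_int_sq (r : ℝ≥0) :
    ∫ n, ((n : ℝ) ^ 2) ∂poissonMeasure r = (r : ℝ) + (r : ℝ) ^ 2 :=
  poisson_integral r _ (fun _ => sq_nonneg _) _ (poisson_hasSum_sq r)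

lemma pois_integrable_id (r : ℝ≥0) : Integrable (fun n : ℕ => (n : ℝ)) (poissonMeasure r) :=
  poisson_integrable r _ (fun n => Nat.cast_nonneg n) _ (poisson_hasSum_id r)

lemma pois_integrable_sq (r : ℝ≥0) :
    Integrable (fun n : ℕ => (n : ℝ) ^ 2) (poissonMeasure r) :=
  poisson_integrable r _ (fun _ => sq_nonneg _) _ (poisson_hasSum_sq r)

lemma pois_integrable_phi (μ : ℝ) (r : ℝ≥0) :
    Integrable (fun n : ℕ => ((n : ℝ) - μ) ^ 2 - (n : ℝ)) (poissonMeasure r) := by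
  have h : (fun n : ℕ => ((n : ℝ) - μ) ^ 2 - (n : ℝ))
      = fun n : ℕ => ((n : ℝ) ^ 2 - (2 * μ + 1) * (n : ℝ)) + μ ^ 2 := by
    funext n; ring
  rw [h]
  exact (((pois_integrable_sq r).sub ((pois_integrable_id r).const_mul _)).add
    (integrable_const _))

lemma pois_int_phi (μ : ℝ) (r : ℝ≥0) :
    ∫ n, (((n : ℝ) - μ) ^ 2 - (n : ℝ)) ∂poissonMeasure r = ((r : ℝ) - μ) ^ 2 := by
  have h : (fun n : ℕ => ((n : ℝ) - μ) ^ 2 - (n : ℝ))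
      = fun n : ℕ => ((n : ℝ) ^ 2 - (2 * μ + 1) * (n : ℝ)) + μ ^ 2 := by
    funext n; ring
  have h1 : Integrable (fun n : ℕ => (n : ℝ) ^ 2 - (2 * μ + 1) * (n : ℝ))
      (poissonMeasure r) := (pois_integrable_sq r).sub ((pois_integrable_id r).const_mul _)
  have h2 : Integrable (fun n : ℕ => (2 * μ + 1) * (n : ℝ)) (poissonMeasure r) :=
    (pois_integrable_id r).const_mul _
  rw [h, integral_add h1 (integrable_const _),
    integral_sub (pois_integrable_sq r) h2,
    integral_const_mul, pois_int_sq, pois_int_id, integral_const]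
  simp
  ring

lemma pois_lint_bound (c : ℝ) (hc : 0 ≤ c) (r : ℝ≥0) (f : ℕ → ℝ≥0∞)
    (hf : ∀ m : ℕ, f m ≤ ENNReal.ofReal (c * (1 + (m : ℝ) ^ 2))) :
    ∫⁻ m, f m ∂poissonMeasure r
      ≤ ENNReal.ofReal (c * (1 + ((r : ℝ) + (r : ℝ) ^ 2))) := by
  have hs : HasSum (fun n : ℕ => (c * (1 + (n : ℝ) ^ 2)) * poissonPMFReal r n)
      (c * (1 + ((r : ℝ) + (r : ℝ) ^ 2))) := by
    have h := ((poissonPMFRealSum r).add (poisson_hasSum_sq r)).mul_left c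
    convert h using 1
    · rfl
    funext n; simp only [poissonPMFReal]; ring
  calc ∫⁻ m, f m ∂poissonMeasure r
      ≤ ∫⁻ m, ENNReal.ofReal (c * (1 + (m : ℝ) ^ 2)) ∂poissonMeasure r :=
        lintegral_mono hf
    _ = ENNReal.ofReal (c * (1 + ((r : ℝ) + (r : ℝ) ^ 2))) :=
        poisson_lintegral_ofReal r _ (fun n => by positivity) _ hs

lemma real_bound27 (ci cj x y : ℝ) (hci : 0 ≤ ci) (hcj : 0 ≤ cj) (hx : 0 ≤ x) (hy : 0 ≤ y) :
    (ci * (1 + (x + x ^ 2))) * (cj * (1 + (y + y ^ 2)))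
      ≤ 27 * (ci * cj) * (1 + (x ^ 4 + y ^ 4)) := by
  have h1 : 1 + (x + x ^ 2) ≤ 3 * (1 + x ^ 2) := by nlinarith [sq_nonneg (x - 1)]
  have h2 : 1 + (y + y ^ 2) ≤ 3 * (1 + y ^ 2) := by nlinarith [sq_nonneg (y - 1)]
  have h3 : (1 + x ^ 2) * (1 + y ^ 2) ≤ 1 + (1 + x ^ 4) + (1 + y ^ 4) + (x ^ 4 + y ^ 4) := by
    nlinarith [sq_nonneg (x ^ 2 - 1), sq_nonneg (y ^ 2 - 1), sq_nonneg (x ^ 2 - y ^ 2)]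
  have h4 : (1 + (x + x ^ 2)) * (1 + (y + y ^ 2)) ≤ 27 * (1 + (x ^ 4 + y ^ 4)) := by
    calc (1 + (x + x ^ 2)) * (1 + (y + y ^ 2)) ≤ (3 * (1 + x ^ 2)) * (3 * (1 + y ^ 2)) := by
          apply mul_le_mul h1 h2 (by positivity) (by positivity)
      _ = 9 * ((1 + x ^ 2) * (1 + y ^ 2)) := by ring
      _ ≤ 9 * (1 + (1 + x ^ 4) + (1 + y ^ 4) + (x ^ 4 + y ^ 4)) := by linarith
      _ ≤ 27 * (1 + (x ^ 4 + y ^ 4)) := by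
          nlinarith [pow_nonneg hx 4, pow_nonneg hy 4]
  calc (ci * (1 + (x + x ^ 2))) * (cj * (1 + (y + y ^ 2)))
      = (ci * cj) * ((1 + (x + x ^ 2)) * (1 + (y + y ^ 2))) := by ring
    _ ≤ (ci * cj) * (27 * (1 + (x ^ 4 + y ^ 4))) := by
        apply mul_le_mul_of_nonneg_left h4 (by positivity)
    _ = 27 * (ci * cj) * (1 + (x ^ 4 + y ^ 4)) := by ring

lemma phi_abs_bound (μ' : ℝ) (m : ℕ) :
    |((m : ℝ) - μ') ^ 2 - (m : ℝ)| ≤ (2 * μ' ^ 2 + 3) * (1 + (m : ℝ) ^ 2) := by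
  have hm : (0 : ℝ) ≤ (m : ℝ) := Nat.cast_nonneg m
  rw [abs_le]
  constructor <;> nlinarith [sq_nonneg ((m : ℝ) - μ'), sq_nonneg ((m : ℝ) + μ'),
    sq_nonneg ((m : ℝ) - 1), sq_nonneg μ', sq_nonneg (m : ℝ)]

/-! ### Disintegration lemmas -/

lemma master_hmap {Ω : Type*} [MeasurableSpace Ω] {P : Measure Ω} [IsProbabilityMeasure P]
    (Λi Λj : Ω → ℝ≥0) (Yi Yj : Ω → ℕ)
    (hYi : Measurable Yi) (hYj : Measurable Yj) :
    P.map (fun ω => ((Λi ω, Λj ω), (Yi ω, Yj ω)))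
      = (P.map (fun ω => (Λi ω, Λj ω))) ⊗ₘ
        condDistrib (fun ω' => (Yi ω', Yj ω')) (fun ω' => (Λi ω', Λj ω')) P := by
  have h1 : (P.map fun ω => ((Λi ω, Λj ω), (Yi ω, Yj ω))).fst
      = P.map (fun ω => (Λi ω, Λj ω)) :=
    Measure.fst_map_prodMk₀ (Y := fun ω => (Yi ω, Yj ω)) (hYi.prodMk hYj).aemeasurable
  have h2 := compProd_map_condDistrib (mβ := inferInstance) (μ := P) (X := fun ω => (Λi ω, Λj ω)) (hYi.prodMk hYj).aemeasurable
  exact h2.symm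

lemma master_lintegral {Ω : Type*} [MeasurableSpace Ω] {P : Measure Ω} [IsProbabilityMeasure P]
    (Λi Λj : Ω → ℝ≥0) (Yi Yj : Ω → ℕ)
    (hΛi : Measurable Λi) (hΛj : Measurable Λj)
    (hYi : Measurable Yi) (hYj : Measurable Yj)
    (hcond : ∀ᵐ ω ∂P,
      condDistrib (fun ω' => (Yi ω', Yj ω')) (fun ω' => (Λi ω', Λj ω')) P (Λi ω, Λj ω)
        = (poissonMeasure (Λi ω)).prod (poissonMeasure (Λj ω)))
    (g h : ℕ → ℝ≥0∞) :
    ∫⁻ ω, g (Yi ω) * h (Yj ω) ∂P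
      = ∫⁻ ω, (∫⁻ m, g m ∂poissonMeasure (Λi ω)) * (∫⁻ n, h n ∂poissonMeasure (Λj ω)) ∂P := by
  have hX : Measurable (fun ω => (Λi ω, Λj ω)) := hΛi.prodMk hΛj
  have hYp : Measurable (fun ω => (Yi ω, Yj ω)) := hYi.prodMk hYj
  have hG2 : Measurable (fun z : (ℝ≥0 × ℝ≥0) × (ℕ × ℕ) => g z.2.1 * h z.2.2) :=
    (measurable_of_countable (fun y : ℕ × ℕ => g y.1 * h y.2)).comp measurable_snd
  calc ∫⁻ ω, g (Yi ω) * h (Yj ω) ∂P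
      = ∫⁻ z, g z.2.1 * h z.2.2 ∂(P.map fun ω => ((Λi ω, Λj ω), (Yi ω, Yj ω))) := by
        rw [lintegral_map hG2 (hX.prodMk hYp)]
    _ = ∫⁻ x, ∫⁻ y, g y.1 * h y.2
          ∂(condDistrib (fun ω' => (Yi ω', Yj ω')) (fun ω' => (Λi ω', Λj ω')) P) x
          ∂(P.map (fun ω => (Λi ω, Λj ω))) := by
        rw [master_hmap Λi Λj Yi Yj hYi hYj, Measure.lintegral_compProd hG2]
    _ = ∫⁻ ω, ∫⁻ y, g y.1 * h y.2
          ∂(condDistrib (fun ω' => (Yi ω', Yj ω')) (fun ω' => (Λi ω', Λj ω')) P) (Λi ω, Λj ω)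
          ∂P := by
        rw [lintegral_map (Measurable.lintegral_kernel_prod_right' hG2) hX]
    _ = ∫⁻ ω, ∫⁻ y, g y.1 * h y.2
          ∂((poissonMeasure (Λi ω)).prod (poissonMeasure (Λj ω))) ∂P := by
        refine lintegral_congr_ae (hcond.mono fun ω hω => ?_)
        dsimp only; rw [hω]
    _ = ∫⁻ ω, (∫⁻ m, g m ∂poissonMeasure (Λi ω)) * (∫⁻ n, h n ∂poissonMeasure (Λj ω)) ∂P := by
        refine lintegral_congr fun ω => ?_
        exact lintegral_prod_mul (measurable_of_countable g).aemeasurable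
          (measurable_of_countable h).aemeasurable

lemma master_integral {Ω : Type*} [MeasurableSpace Ω] {P : Measure Ω} [IsProbabilityMeasure P]
    (Λi Λj : Ω → ℝ≥0) (Yi Yj : Ω → ℕ)
    (hΛi : Measurable Λi) (hΛj : Measurable Λj)
    (hYi : Measurable Yi) (hYj : Measurable Yj)
    (hcond : ∀ᵐ ω ∂P,
      condDistrib (fun ω' => (Yi ω', Yj ω')) (fun ω' => (Λi ω', Λj ω')) P (Λi ω, Λj ω)
        = (poissonMeasure (Λi ω)).prod (poissonMeasure (Λj ω)))
    (φ ψ : ℕ → ℝ)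
    (hint : Integrable (fun ω => φ (Yi ω) * ψ (Yj ω)) P) :
    ∫ ω, φ (Yi ω) * ψ (Yj ω) ∂P
      = ∫ ω, (∫ m, φ m ∂poissonMeasure (Λi ω)) * (∫ n, ψ n ∂poissonMeasure (Λj ω)) ∂P := by
  have hX : Measurable (fun ω => (Λi ω, Λj ω)) := hΛi.prodMk hΛj
  have hYp : Measurable (fun ω => (Yi ω, Yj ω)) := hYi.prodMk hYj
  have hf_meas : StronglyMeasurable (fun z : (ℝ≥0 × ℝ≥0) × (ℕ × ℕ) => φ z.2.1 * ψ z.2.2) :=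
    ((measurable_of_countable (fun y : ℕ × ℕ => φ y.1 * ψ y.2)).comp
      measurable_snd).stronglyMeasurable
  have h1 := condExp_prod_ae_eq_integral_condDistrib
    (f := fun z : (ℝ≥0 × ℝ≥0) × (ℕ × ℕ) => φ z.2.1 * ψ z.2.2)
    hX hYp.aemeasurable hf_meas hint
  have h2 : ∫ ω, φ (Yi ω) * ψ (Yj ω) ∂P
      = ∫ ω, ∫ y, φ y.1 * ψ y.2
          ∂(condDistrib (fun ω' => (Yi ω', Yj ω')) (fun ω' => (Λi ω', Λj ω')) P)
            (Λi ω, Λj ω) ∂P := by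
    rw [← integral_condExp (f := fun ω => φ (Yi ω) * ψ (Yj ω)) hX.comap_le]
    exact integral_congr_ae h1
  rw [h2]
  calc ∫ ω, ∫ y, φ y.1 * ψ y.2
          ∂(condDistrib (fun ω' => (Yi ω', Yj ω')) (fun ω' => (Λi ω', Λj ω')) P)
            (Λi ω, Λj ω) ∂P
      = ∫ ω, ∫ y, φ y.1 * ψ y.2
          ∂((poissonMeasure (Λi ω)).prod (poissonMeasure (Λj ω))) ∂P := by
        refine integral_congr_ae (hcond.mono fun ω hω => ?_)
        dsimp only; rw [hω]
    _ = ∫ ω, (∫ m, φ m ∂poissonMeasure (Λi ω)) * (∫ n, ψ n ∂poissonMeasure (Λj ω)) ∂P := by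
        congr 1
        funext ω
        exact integral_prod_mul φ ψ

/-! ### Integrability lemmas -/

lemma lambda_pow4_integrable {Ω : Type*} [MeasurableSpace Ω] {P : Measure Ω}
    [IsProbabilityMeasure P] (Λ : Ω → ℝ≥0) (μ' : ℝ)
    (hmom : MemLp (fun ω => (Λ ω : ℝ)) 4 P) :
    Integrable (fun ω => ((Λ ω : ℝ) - μ') ^ 4) P := by
  have hL4 : MemLp (fun ω => (Λ ω : ℝ) - μ') 4 P := hmom.sub (memLp_const μ')
  have h := hL4.integrable_norm_rpow (by norm_num) (by norm_num)
  refine h.congr (Filter.Eventually.of_forall fun ω => ?_)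
  have h4 : ((4 : ℝ≥0∞)).toReal = ((4 : ℕ) : ℝ) := by norm_num
  dsimp only
  rw [h4, Real.rpow_natCast, Real.norm_eq_abs, ← abs_pow, abs_of_nonneg]
  positivity

lemma lambda_fin4 {Ω : Type*} [MeasurableSpace Ω] {P : Measure Ω}
    [IsProbabilityMeasure P] (Λ : Ω → ℝ≥0)
    (hmom : MemLp (fun ω => (Λ ω : ℝ)) 4 P) :
    ∫⁻ ω, ENNReal.ofReal ((Λ ω : ℝ) ^ 4) ∂P ≠ ∞ := by
  have h := lambda_pow4_integrable Λ 0 hmom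
  simp only [sub_zero] at h
  have h2 := h.hasFiniteIntegral
  rw [hasFiniteIntegral_iff_norm] at h2
  refine ne_of_lt (lt_of_le_of_lt (le_of_eq ?_) h2)
  refine lintegral_congr fun ω => ?_
  rw [Real.norm_eq_abs, abs_of_nonneg (by positivity)]

lemma lambda_sq_memL2 {Ω : Type*} [MeasurableSpace Ω] {P : Measure Ω}
    [IsProbabilityMeasure P] (Λ : Ω → ℝ≥0) (hΛ : Measurable Λ) (μ' : ℝ)
    (hmom : MemLp (fun ω => (Λ ω : ℝ)) 4 P) :
    MemLp (fun ω => ((Λ ω : ℝ) - μ') ^ 2) 2 P := by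
  have hmeas : AEStronglyMeasurable (fun ω => ((Λ ω : ℝ) - μ') ^ 2) P :=
    (((hΛ.coe_nnreal_real).sub measurable_const).pow_const 2).aestronglyMeasurable
  refine (memLp_two_iff_integrable_sq hmeas).mpr ?_
  refine (lambda_pow4_integrable Λ μ' hmom).congr (Filter.Eventually.of_forall fun ω => ?_)
  ring

lemma lambda_sq_integrable {Ω : Type*} [MeasurableSpace Ω] {P : Measure Ω}
    [IsProbabilityMeasure P] (Λ : Ω → ℝ≥0) (μ' : ℝ)
    (hmom : MemLp (fun ω => (Λ ω : ℝ)) 4 P) :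
    Integrable (fun ω => ((Λ ω : ℝ) - μ') ^ 2) P := by
  have hL4 : MemLp (fun ω => (Λ ω : ℝ) - μ') 4 P := hmom.sub (memLp_const μ')
  have hL2 : MemLp (fun ω => (Λ ω : ℝ) - μ') 2 P :=
    hL4.mono_exponent (by norm_num)
  exact hL2.integrable_sq

lemma memL2_mul_integrable {Ω : Type*} [MeasurableSpace Ω] {P : Measure Ω}
    [IsProbabilityMeasure P] (f g : Ω → ℝ) (hf : MemLp f 2 P) (hg : MemLp g 2 P) :
    Integrable (fun ω => f ω * g ω) P := by
  have h1 : Integrable (fun ω => (f ω + g ω) ^ 2) P := (hf.add hg).integrable_sq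
  have h2 : Integrable (fun ω => (f ω) ^ 2) P := hf.integrable_sq
  have h3 : Integrable (fun ω => (g ω) ^ 2) P := hg.integrable_sq
  have h4 : Integrable (fun ω => ((f ω + g ω) ^ 2 - f ω ^ 2) - g ω ^ 2) P :=
    (h1.sub h2).sub h3
  refine (h4.div_const 2).congr (Filter.Eventually.of_forall fun ω => ?_)
  ring

lemma master_integrable {Ω : Type*} [MeasurableSpace Ω] {P : Measure Ω} [IsProbabilityMeasure P]
    (Λi Λj : Ω → ℝ≥0) (Yi Yj : Ω → ℕ)
    (hΛi : Measurable Λi) (hΛj : Measurable Λj)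
    (hYi : Measurable Yi) (hYj : Measurable Yj)
    (hcond : ∀ᵐ ω ∂P,
      condDistrib (fun ω' => (Yi ω', Yj ω')) (fun ω' => (Λi ω', Λj ω')) P (Λi ω, Λj ω)
        = (poissonMeasure (Λi ω)).prod (poissonMeasure (Λj ω)))
    (hfin4i : ∫⁻ ω, ENNReal.ofReal ((Λi ω : ℝ) ^ 4) ∂P ≠ ∞)
    (hfin4j : ∫⁻ ω, ENNReal.ofReal ((Λj ω : ℝ) ^ 4) ∂P ≠ ∞)
    (φ ψ : ℕ → ℝ) (ci cj : ℝ) (hci : 0 ≤ ci) (hcj : 0 ≤ cj)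
    (hφ : ∀ m : ℕ, |φ m| ≤ ci * (1 + (m : ℝ) ^ 2))
    (hψ : ∀ m : ℕ, |ψ m| ≤ cj * (1 + (m : ℝ) ^ 2)) :
    Integrable (fun ω => φ (Yi ω) * ψ (Yj ω)) P := by
  refine ⟨(((measurable_of_countable φ).comp hYi).mul
    ((measurable_of_countable ψ).comp hYj)).aestronglyMeasurable, ?_⟩
  rw [hasFiniteIntegral_iff_norm]
  have hnorm : ∀ ω, ENNReal.ofReal ‖φ (Yi ω) * ψ (Yj ω)‖
      = ENNReal.ofReal |φ (Yi ω)| * ENNReal.ofReal |ψ (Yj ω)| := fun ω => by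
    rw [Real.norm_eq_abs, abs_mul, ENNReal.ofReal_mul (abs_nonneg _)]
  have hKnn : (0 : ℝ) ≤ 27 * (ci * cj) := by positivity
  calc ∫⁻ ω, ENNReal.ofReal ‖φ (Yi ω) * ψ (Yj ω)‖ ∂P
      = ∫⁻ ω, (fun m => ENNReal.ofReal |φ m|) (Yi ω)
          * (fun n => ENNReal.ofReal |ψ n|) (Yj ω) ∂P := lintegral_congr hnorm
    _ = ∫⁻ ω, (∫⁻ m, ENNReal.ofReal |φ m| ∂poissonMeasure (Λi ω))
          * (∫⁻ n, ENNReal.ofReal |ψ n| ∂poissonMeasure (Λj ω)) ∂P :=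
        master_lintegral Λi Λj Yi Yj hΛi hΛj hYi hYj hcond
          (fun m => ENNReal.ofReal |φ m|) (fun n => ENNReal.ofReal |ψ n|)
    _ ≤ ∫⁻ ω, ENNReal.ofReal (ci * (1 + ((Λi ω : ℝ) + (Λi ω : ℝ) ^ 2)))
          * ENNReal.ofReal (cj * (1 + ((Λj ω : ℝ) + (Λj ω : ℝ) ^ 2))) ∂P := by
        refine lintegral_mono fun ω => mul_le_mul' ?_ ?_
        · exact pois_lint_bound ci hci (Λi ω) _
            (fun m => ENNReal.ofReal_le_ofReal (hφ m))
        · exact pois_lint_bound cj hcj (Λj ω) _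
            (fun m => ENNReal.ofReal_le_ofReal (hψ m))
    _ ≤ ∫⁻ ω, ENNReal.ofReal (27 * (ci * cj)
          * (1 + ((Λi ω : ℝ) ^ 4 + (Λj ω : ℝ) ^ 4))) ∂P := by
        refine lintegral_mono fun ω => ?_
        rw [← ENNReal.ofReal_mul (by positivity)]
        exact ENNReal.ofReal_le_ofReal (real_bound27 ci cj _ _ hci hcj
          (Λi ω).coe_nonneg (Λj ω).coe_nonneg)
    _ = ∫⁻ ω, ENNReal.ofReal (27 * (ci * cj))
          * (1 + (ENNReal.ofReal ((Λi ω : ℝ) ^ 4) + ENNReal.ofReal ((Λj ω : ℝ) ^ 4))) ∂P := by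
        refine lintegral_congr fun ω => ?_
        rw [ENNReal.ofReal_mul hKnn, ENNReal.ofReal_add (by norm_num) (by positivity),
          ENNReal.ofReal_add (by positivity) (by positivity), ENNReal.ofReal_one]
    _ < ∞ := by
        rw [lintegral_const_mul' _ _ ENNReal.ofReal_ne_top]
        refine ENNReal.mul_lt_top ENNReal.ofReal_lt_top ?_
        have hmi : Measurable fun ω => ENNReal.ofReal ((Λi ω : ℝ) ^ 4) :=
          ((hΛi.coe_nnreal_real).pow_const 4).ennreal_ofReal
        rw [lintegral_add_left measurable_const, lintegral_add_left hmi, lintegral_const]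
        simp only [measure_univ, mul_one]
        exact ENNReal.add_lt_top.mpr ⟨ENNReal.one_lt_top,
          ENNReal.add_lt_top.mpr ⟨hfin4i.lt_top, hfin4j.lt_top⟩⟩

/-! ### Covariance lemmas -/

lemma rcov_div {Ω : Type*} [MeasurableSpace Ω] (P : Measure Ω) (f g : Ω → ℝ) (c d : ℝ) :
    rcov P (fun ω => f ω / c) (fun ω => g ω / d) = rcov P f g / (c * d) := by
  have h1 : ∫ ω', f ω' / c ∂P = (∫ ω', f ω' ∂P) / c := integral_div c f
  have h2 : ∫ ω', g ω' / d ∂P = (∫ ω', g ω' ∂P) / d := integral_div d g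
  simp only [rcov]
  rw [h1, h2, ← integral_div (c * d)
    (fun ω => (f ω - ∫ ω', f ω' ∂P) * (g ω - ∫ ω', g ω' ∂P))]
  congr 1
  funext ω
  ring

lemma rcov_const_mul {Ω : Type*} [MeasurableSpace Ω] (P : Measure Ω) (f g : Ω → ℝ) (c d : ℝ) :
    rcov P (fun ω => c * f ω) (fun ω => d * g ω) = c * d * rcov P f g := by
  have h1 : ∫ ω', c * f ω' ∂P = c * ∫ ω', f ω' ∂P := integral_const_mul c f
  have h2 : ∫ ω', d * g ω' ∂P = d * ∫ ω', g ω' ∂P := integral_const_mul d g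
  simp only [rcov]
  rw [h1, h2, ← integral_const_mul (c * d)
    (fun ω => (f ω - ∫ ω', f ω' ∂P) * (g ω - ∫ ω', g ω' ∂P))]
  congr 1
  funext ω
  ring

lemma rcov_eq_sub {Ω : Type*} [MeasurableSpace Ω] {P : Measure Ω} [IsProbabilityMeasure P]
    (f g : Ω → ℝ) (hf : Integrable f P) (hg : Integrable g P)
    (hfg : Integrable (fun ω => f ω * g ω) P) :
    rcov P f g = ∫ ω, f ω * g ω ∂P - (∫ ω, f ω ∂P) * ∫ ω, g ω ∂P := by
  set a := ∫ ω, f ω ∂P with ha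
  set b := ∫ ω, g ω ∂P with hb
  have hexp : (fun ω => (f ω - a) * (g ω - b))
      = fun ω => f ω * g ω - (a * g ω + (b * f ω - a * b)) := by
    funext ω; ring
  have hg' : Integrable (fun ω => a * g ω) P := hg.const_mul a
  have hf' : Integrable (fun ω => b * f ω - a * b) P := by
    exact (hf.const_mul b).sub (integrable_const _)
  have hsum : Integrable (fun ω => a * g ω + (b * f ω - a * b)) P := by exact hg'.add hf'
  have hbf : Integrable (fun ω => b * f ω) P := hf.const_mul b
  rw [rcov, ← ha, ← hb, hexp, integral_sub hfg hsum, integral_add hg' hf',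
    integral_sub hbf (integrable_const _),
    integral_const_mul, integral_const_mul, integral_const]
  simp only [measure_univ, ENNReal.toReal_one, one_smul, smul_eq_mul, probReal_univ, ← ha, ← hb]
  ring

end OracleAux

end OracleAux


open OracleAux in
/-- Off-diagonal covariance identity for oracle contributions: if `Yᵢ, Yⱼ` are,
conditionally on `(Λᵢ, Λⱼ)`, independent Poisson with means `Λᵢ, Λⱼ`, then
`Cov(ψ°ᵢ, ψ°ⱼ) = Cov((Λᵢ−μᵢ)², (Λⱼ−μⱼ)²)/(μᵢ²μⱼ²)`. In particular, under the
multiplicative scaling `Λₗ = Ψ·Λ̃ₗ`, this covariance does not depend on `Ψ`. -/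
theorem oracle_psi_offdiag_covariance
    {Ω : Type*} [MeasurableSpace Ω] {P : Measure Ω} [IsProbabilityMeasure P]
    (Λi Λj : Ω → ℝ≥0) (Yi Yj : Ω → ℕ)
    (hΛi : Measurable Λi) (hΛj : Measurable Λj)
    (hYi : Measurable Yi) (hYj : Measurable Yj)
    (hmomi : MemLp (fun ω => (Λi ω : ℝ)) 4 P)
    (hmomj : MemLp (fun ω => (Λj ω : ℝ)) 4 P)
    (hμi : 0 < ∫ ω, (Λi ω : ℝ) ∂P) (hμj : 0 < ∫ ω, (Λj ω : ℝ) ∂P)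
    (hcond : ∀ᵐ ω ∂P,
      condDistrib (fun ω' => (Yi ω', Yj ω')) (fun ω' => (Λi ω', Λj ω')) P (Λi ω, Λj ω)
        = (poissonMeasure (Λi ω)).prod (poissonMeasure (Λj ω))) :
    rcov P
        (fun ω => (((Yi ω : ℝ) - ∫ ω', (Λi ω' : ℝ) ∂P) ^ 2 - (Yi ω : ℝ))
            / (∫ ω', (Λi ω' : ℝ) ∂P) ^ 2)
        (fun ω => (((Yj ω : ℝ) - ∫ ω', (Λj ω' : ℝ) ∂P) ^ 2 - (Yj ω : ℝ))
            / (∫ ω', (Λj ω' : ℝ) ∂P) ^ 2)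
      = rcov P
          (fun ω => ((Λi ω : ℝ) - ∫ ω', (Λi ω' : ℝ) ∂P) ^ 2)
          (fun ω => ((Λj ω : ℝ) - ∫ ω', (Λj ω' : ℝ) ∂P) ^ 2)
        / ((∫ ω, (Λi ω : ℝ) ∂P) ^ 2 * (∫ ω, (Λj ω : ℝ) ∂P) ^ 2) ∧
    ∀ (Ψ : ℝ≥0) (Λti Λtj : Ω → ℝ≥0), 0 < Ψ →
      (∀ ω, Λi ω = Ψ * Λti ω) → (∀ ω, Λj ω = Ψ * Λtj ω) →
      rcov P
          (fun ω => (((Yi ω : ℝ) - ∫ ω', (Λi ω' : ℝ) ∂P) ^ 2 - (Yi ω : ℝ))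
              / (∫ ω', (Λi ω' : ℝ) ∂P) ^ 2)
          (fun ω => (((Yj ω : ℝ) - ∫ ω', (Λj ω' : ℝ) ∂P) ^ 2 - (Yj ω : ℝ))
              / (∫ ω', (Λj ω' : ℝ) ∂P) ^ 2)
        = rcov P
            (fun ω => ((Λti ω : ℝ) - ∫ ω', (Λti ω' : ℝ) ∂P) ^ 2)
            (fun ω => ((Λtj ω : ℝ) - ∫ ω', (Λtj ω' : ℝ) ∂P) ^ 2)
          / ((∫ ω, (Λti ω : ℝ) ∂P) ^ 2 * (∫ ω, (Λtj ω : ℝ) ∂P) ^ 2) := by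
  
  set μi : ℝ := ∫ ω, (Λi ω : ℝ) ∂P with hμi_def
  set μj : ℝ := ∫ ω, (Λj ω : ℝ) ∂P with hμj_def
  have hfin4i := lambda_fin4 Λi hmomi
  have hfin4j := lambda_fin4 Λj hmomj
  have hb1 : ∀ m : ℕ, |(fun _ : ℕ => (1 : ℝ)) m| ≤ 1 * (1 + (m : ℝ) ^ 2) := by
    intro m
    simp only [abs_one, one_mul]
    nlinarith [sq_nonneg (m : ℝ)]
  have hci : (0 : ℝ) ≤ 2 * μi ^ 2 + 3 := by positivity
  have hcj : (0 : ℝ) ≤ 2 * μj ^ 2 + 3 := by positivity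
  -- integrability on the Y side
  have hintij : Integrable (fun ω =>
      (((Yi ω : ℝ) - μi) ^ 2 - (Yi ω : ℝ)) * (((Yj ω : ℝ) - μj) ^ 2 - (Yj ω : ℝ))) P :=
    master_integrable Λi Λj Yi Yj hΛi hΛj hYi hYj hcond hfin4i hfin4j
      (fun m => ((m : ℝ) - μi) ^ 2 - (m : ℝ)) (fun m => ((m : ℝ) - μj) ^ 2 - (m : ℝ))
      _ _ hci hcj (phi_abs_bound μi) (phi_abs_bound μj)
  have hinti1 : Integrable (fun ω =>
      (((Yi ω : ℝ) - μi) ^ 2 - (Yi ω : ℝ)) * (fun _ : ℕ => (1 : ℝ)) (Yj ω)) P :=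
    master_integrable Λi Λj Yi Yj hΛi hΛj hYi hYj hcond hfin4i hfin4j
      (fun m => ((m : ℝ) - μi) ^ 2 - (m : ℝ)) (fun _ => (1 : ℝ))
      _ _ hci (by norm_num) (phi_abs_bound μi) hb1
  have hint1j : Integrable (fun ω =>
      (fun _ : ℕ => (1 : ℝ)) (Yi ω) * (((Yj ω : ℝ) - μj) ^ 2 - (Yj ω : ℝ))) P :=
    master_integrable Λi Λj Yi Yj hΛi hΛj hYi hYj hcond hfin4i hfin4j
      (fun _ => (1 : ℝ)) (fun m => ((m : ℝ) - μj) ^ 2 - (m : ℝ))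
      _ _ (by norm_num) hcj hb1 (phi_abs_bound μj)
  have hinti : Integrable (fun ω => ((Yi ω : ℝ) - μi) ^ 2 - (Yi ω : ℝ)) P :=
    hinti1.congr (Filter.Eventually.of_forall fun ω => mul_one _)
  have hintj : Integrable (fun ω => ((Yj ω : ℝ) - μj) ^ 2 - (Yj ω : ℝ)) P :=
    hint1j.congr (Filter.Eventually.of_forall fun ω => one_mul _)
  -- integrability on the Λ side
  have hBi_int : Integrable (fun ω => ((Λi ω : ℝ) - μi) ^ 2) P :=
    lambda_sq_integrable Λi μi hmomi
  have hBj_int : Integrable (fun ω => ((Λj ω : ℝ) - μj) ^ 2) P :=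
    lambda_sq_integrable Λj μj hmomj
  have hBij_int : Integrable (fun ω => ((Λi ω : ℝ) - μi) ^ 2 * ((Λj ω : ℝ) - μj) ^ 2) P :=
    memL2_mul_integrable _ _ (lambda_sq_memL2 Λi hΛi μi hmomi)
      (lambda_sq_memL2 Λj hΛj μj hmomj)
  -- value identities
  have hEij : ∫ ω, (((Yi ω : ℝ) - μi) ^ 2 - (Yi ω : ℝ))
        * (((Yj ω : ℝ) - μj) ^ 2 - (Yj ω : ℝ)) ∂P
      = ∫ ω, ((Λi ω : ℝ) - μi) ^ 2 * ((Λj ω : ℝ) - μj) ^ 2 ∂P := by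
    have hstep := master_integral Λi Λj Yi Yj hΛi hΛj hYi hYj hcond
      (fun m => ((m : ℝ) - μi) ^ 2 - (m : ℝ)) (fun m => ((m : ℝ) - μj) ^ 2 - (m : ℝ))
      hintij
    refine hstep.trans ?_
    congr 1
    funext ω
    rw [pois_int_phi μi (Λi ω), pois_int_phi μj (Λj ω)]
  have hEi : ∫ ω, (((Yi ω : ℝ) - μi) ^ 2 - (Yi ω : ℝ)) ∂P
      = ∫ ω, ((Λi ω : ℝ) - μi) ^ 2 ∂P := by
    have hstep := master_integral Λi Λj Yi Yj hΛi hΛj hYi hYj hcond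
      (fun m => ((m : ℝ) - μi) ^ 2 - (m : ℝ)) (fun _ => (1 : ℝ)) hinti1
    calc ∫ ω, (((Yi ω : ℝ) - μi) ^ 2 - (Yi ω : ℝ)) ∂P
        = ∫ ω, (((Yi ω : ℝ) - μi) ^ 2 - (Yi ω : ℝ)) * (fun _ : ℕ => (1 : ℝ)) (Yj ω) ∂P := by
          congr 1; funext ω; simp
      _ = ∫ ω, (∫ m, (((m : ℝ) - μi) ^ 2 - (m : ℝ)) ∂poissonMeasure (Λi ω))
            * (∫ _n, (1 : ℝ) ∂poissonMeasure (Λj ω)) ∂P := hstep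
      _ = ∫ ω, ((Λi ω : ℝ) - μi) ^ 2 ∂P := by
          congr 1; funext ω
          rw [pois_int_phi μi (Λi ω)]
          simp
  have hEj : ∫ ω, (((Yj ω : ℝ) - μj) ^ 2 - (Yj ω : ℝ)) ∂P
      = ∫ ω, ((Λj ω : ℝ) - μj) ^ 2 ∂P := by
    have hstep := master_integral Λi Λj Yi Yj hΛi hΛj hYi hYj hcond
      (fun _ => (1 : ℝ)) (fun m => ((m : ℝ) - μj) ^ 2 - (m : ℝ)) hint1j
    calc ∫ ω, (((Yj ω : ℝ) - μj) ^ 2 - (Yj ω : ℝ)) ∂P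
        = ∫ ω, (fun _ : ℕ => (1 : ℝ)) (Yi ω) * (((Yj ω : ℝ) - μj) ^ 2 - (Yj ω : ℝ)) ∂P := by
          congr 1; funext ω; simp
      _ = ∫ ω, (∫ _m, (1 : ℝ) ∂poissonMeasure (Λi ω))
            * (∫ n, (((n : ℝ) - μj) ^ 2 - (n : ℝ)) ∂poissonMeasure (Λj ω)) ∂P := hstep
      _ = ∫ ω, ((Λj ω : ℝ) - μj) ^ 2 ∂P := by
          congr 1; funext ω
          rw [pois_int_phi μj (Λj ω)]
          simp
  -- covariance identity
  have hrc : rcov P (fun ω => ((Yi ω : ℝ) - μi) ^ 2 - (Yi ω : ℝ))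
        (fun ω => ((Yj ω : ℝ) - μj) ^ 2 - (Yj ω : ℝ))
      = rcov P (fun ω => ((Λi ω : ℝ) - μi) ^ 2) (fun ω => ((Λj ω : ℝ) - μj) ^ 2) := by
    have e1 := rcov_eq_sub (fun ω => ((Yi ω : ℝ) - μi) ^ 2 - (Yi ω : ℝ))
      (fun ω => ((Yj ω : ℝ) - μj) ^ 2 - (Yj ω : ℝ)) hinti hintj (by exact hintij)
    have e2 := rcov_eq_sub (fun ω => ((Λi ω : ℝ) - μi) ^ 2)
      (fun ω => ((Λj ω : ℝ) - μj) ^ 2) hBi_int hBj_int (by exact hBij_int)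
    have hval : (∫ ω, (((Yi ω : ℝ) - μi) ^ 2 - (Yi ω : ℝ))
          * (((Yj ω : ℝ) - μj) ^ 2 - (Yj ω : ℝ)) ∂P)
        - (∫ ω, (((Yi ω : ℝ) - μi) ^ 2 - (Yi ω : ℝ)) ∂P)
          * (∫ ω, (((Yj ω : ℝ) - μj) ^ 2 - (Yj ω : ℝ)) ∂P)
        = (∫ ω, ((Λi ω : ℝ) - μi) ^ 2 * ((Λj ω : ℝ) - μj) ^ 2 ∂P)
        - (∫ ω, ((Λi ω : ℝ) - μi) ^ 2 ∂P) * (∫ ω, ((Λj ω : ℝ) - μj) ^ 2 ∂P) := by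
      rw [hEij, hEi, hEj]
    exact e1.trans (hval.trans e2.symm)
  have hmain : rcov P
        (fun ω => (((Yi ω : ℝ) - μi) ^ 2 - (Yi ω : ℝ)) / μi ^ 2)
        (fun ω => (((Yj ω : ℝ) - μj) ^ 2 - (Yj ω : ℝ)) / μj ^ 2)
      = rcov P (fun ω => ((Λi ω : ℝ) - μi) ^ 2) (fun ω => ((Λj ω : ℝ) - μj) ^ 2)
        / (μi ^ 2 * μj ^ 2) := by
    have hd := rcov_div P (fun ω => ((Yi ω : ℝ) - μi) ^ 2 - (Yi ω : ℝ))
      (fun ω => ((Yj ω : ℝ) - μj) ^ 2 - (Yj ω : ℝ)) (μi ^ 2) (μj ^ 2)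
    exact hd.trans (by rw [hrc])
  refine ⟨hmain, ?_⟩
  intro Ψ Λti Λtj hΨ hi hj
  set μti : ℝ := ∫ ω, (Λti ω : ℝ) ∂P with hμti_def
  set μtj : ℝ := ∫ ω, (Λtj ω : ℝ) ∂P with hμtj_def
  have hΨR : (0 : ℝ) < (Ψ : ℝ) := hΨ
  have hcoei : ∀ ω, (Λi ω : ℝ) = (Ψ : ℝ) * (Λti ω : ℝ) := fun ω => by
    rw [hi ω]; push_cast; ring
  have hcoej : ∀ ω, (Λj ω : ℝ) = (Ψ : ℝ) * (Λtj ω : ℝ) := fun ω => by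
    rw [hj ω]; push_cast; ring
  have hμi2 : μi = (Ψ : ℝ) * μti := by
    rw [hμi_def]
    calc ∫ ω, (Λi ω : ℝ) ∂P = ∫ ω, (Ψ : ℝ) * (Λti ω : ℝ) ∂P := by
          congr 1; funext ω; exact hcoei ω
      _ = (Ψ : ℝ) * μti := by rw [integral_const_mul, hμti_def]
  have hμj2 : μj = (Ψ : ℝ) * μtj := by
    rw [hμj_def]
    calc ∫ ω, (Λj ω : ℝ) ∂P = ∫ ω, (Ψ : ℝ) * (Λtj ω : ℝ) ∂P := by
          congr 1; funext ω; exact hcoej ω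
      _ = (Ψ : ℝ) * μtj := by rw [integral_const_mul, hμtj_def]
  have hBri : (fun ω => ((Λi ω : ℝ) - μi) ^ 2)
      = fun ω => (Ψ : ℝ) ^ 2 * (((Λti ω : ℝ) - μti) ^ 2) := by
    funext ω; rw [hcoei ω, hμi2]; ring
  have hBrj : (fun ω => ((Λj ω : ℝ) - μj) ^ 2)
      = fun ω => (Ψ : ℝ) ^ 2 * (((Λtj ω : ℝ) - μtj) ^ 2) := by
    funext ω; rw [hcoej ω, hμj2]; ring
  rw [hmain, hBri, hBrj, rcov_const_mul, hμi2, hμj2]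
  have hne : ((Ψ : ℝ) ^ 2 * (Ψ : ℝ) ^ 2) ≠ 0 := by positivity
  rw [show ((Ψ : ℝ) * μti) ^ 2 * ((Ψ : ℝ) * μtj) ^ 2
      = ((Ψ : ℝ) ^ 2 * (Ψ : ℝ) ^ 2) * (μti ^ 2 * μtj ^ 2) from by ring,
    mul_div_mul_left _ _ hne]
end
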